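/- Let (A, ν) be an integral domain with a negative pseudovaluation and let f ∈ A be a nonzero localizing element, with constants C > 0 and D ≥ 0 as in the localizing condition. Let d ≥ D with d > 0, and let ν' be the induced pseudovaluation on A_f. Every z ∈ A_f has a unique representation z = a/f^m with a ∈ A and m ≥ 0 minimal (equivalently, m = 0 or f does not divide a); set σ(z) = ν(a) − m·d. Then there exists a real constant E > 0 such that ν'(z) ≥ σ(z) ≥ E·ν'(z) for all z ∈ A_f. In particular, the restriction of ν' to A is linearly equivalent to ν. -/

import Mathlib

open scoped Classical

noncomputable section

/-- A pseudovaluation on a commutative ring `A`: a function `ν : A → ℝ ∪ {±∞}` with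
`ν 0 = ∞`, `ν 1 = 0`, `ν (a - b) ≥ min (ν a) (ν b)`, and `ν (a*b) ≥ ν a + ν b`
whenever `ν a ≠ -∞` and `ν b ≠ -∞`. -/
structure IsPseudovaluation {A : Type*} [CommRing A] (ν : A → EReal) : Prop where
  map_zero : ν 0 = ⊤
  map_one : ν 1 = 0
  min_le_sub : ∀ a b : A, min (ν a) (ν b) ≤ ν (a - b)
  add_le_mul : ∀ a b : A, ν a ≠ ⊥ → ν b ≠ ⊥ → ν a + ν b ≤ ν (a * b)

/-- A proper pseudovaluation never takes the value `-∞`. -/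
def IsProperPV {A : Type*} [CommRing A] (ν : A → EReal) : Prop :=
  IsPseudovaluation ν ∧ ∀ a : A, ν a ≠ ⊥

/-- A negative pseudovaluation is proper and satisfies `ν a ≤ 0` for `a ≠ 0`. -/
def IsNegativePV {A : Type*} [CommRing A] (ν : A → EReal) : Prop :=
  IsPseudovaluation ν ∧ (∀ a : A, ν a ≠ ⊥) ∧ ∀ a : A, a ≠ 0 → ν a ≤ 0

/-- `f` is localizing with respect to `ν` if there are `C > 0`, `D ≥ 0` with
`ν (fⁿ x) ≤ C · ν x + n D` for all `n` and `x`. -/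
def IsLocalizing {A : Type*} [CommRing A] (ν : A → EReal) (f : A) : Prop :=
  ∃ C D : ℝ, 0 < C ∧ 0 ≤ D ∧ ∀ (n : ℕ) (x : A),
    ν (f ^ n * x) ≤ (C : EReal) * ν x + (((n : ℝ) * D : ℝ) : EReal)

/-- Two functions `A → ℝ ∪ {±∞}` are linearly equivalent if they dominate each other
up to positive multiplicative and nonnegative additive constants. -/
def LinearlyEquivalent {A : Type*} (ν₁ ν₂ : A → EReal) : Prop :=
  ∃ c₁ c₂ d₁ d₂ : ℝ, 0 < c₁ ∧ 0 < c₂ ∧ 0 ≤ d₁ ∧ 0 ≤ d₂ ∧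
    (∀ a : A, (c₂ : EReal) * ν₂ a - (d₂ : EReal) ≤ ν₁ a) ∧
    (∀ a : A, (c₁ : EReal) * ν₁ a - (d₁ : EReal) ≤ ν₂ a)

/-- The weighted degree pseudovaluation on a multivariate polynomial ring:
`ν (Σ_k c_k T^k) = inf_k { μ(c_k) - Σ_i k_i d_i }`. -/
def weightedDegPV {R : Type*} [CommRing R] (μ : R → EReal) {m : ℕ} (d : Fin m → ℝ)
    (f : MvPolynomial (Fin m) R) : EReal :=
  ⨅ k : Fin m →₀ ℕ, (μ (MvPolynomial.coeff k f) - ((∑ i, (k i : ℝ) * d i : ℝ) : EReal))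

/-- A pseudovaluation `τ` on an `R`-algebra `B` is admissible (relative to `μ` on `R`)
if it is the quotient of a weighted degree pseudovaluation under some surjection
from a polynomial ring. -/
def IsAdmissiblePV {R B : Type*} [CommRing R] [CommRing B] [Algebra R B]
    (μ : R → EReal) (τ : B → EReal) : Prop :=
  ∃ (m : ℕ) (π : MvPolynomial (Fin m) R →ₐ[R] B) (d : Fin m → ℝ),
    Function.Surjective π ∧ (∀ i, 0 < d i) ∧
    ∀ b : B, τ b = ⨆ (f : MvPolynomial (Fin m) R) (_ : π f = b), weightedDegPV μ d f

/-- The pseudovaluation `μ (Σ_i a_i X^i) = min_i { ν(a_i) - i·d }` on `A[X]`. -/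
def polyPV {A : Type*} [CommRing A] (ν : A → EReal) (d : ℝ) (g : Polynomial A) : EReal :=
  ⨅ i : ℕ, (ν (g.coeff i) - (((i : ℝ) * d : ℝ) : EReal))

/-- The induced pseudovaluation on the localization `A_f`: the quotient of `polyPV ν d`
under the map `A[X] → A_f`, `X ↦ f⁻¹`. -/
def locPV {A : Type*} [CommRing A] (ν : A → EReal) (f : A) (d : ℝ)
    (z : Localization.Away f) : EReal :=
  ⨆ (g : Polynomial A)
    (_ : Polynomial.aeval (IsLocalization.Away.invSelf (S := Localization.Away f) f) g = z),
    polyPV ν d g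

/-- The Gauss norm `γ_ε(α) = inf_i { i + ε p^{-i} ν(a_i) }` of a Witt vector. -/
def gaussNorm (p : ℕ) {A : Type*} [CommRing A] (ν : A → EReal) (ε : ℝ)
    (α : WittVector p A) : EReal :=
  ⨅ i : ℕ, ((i : EReal) + ((ε * (p : ℝ) ^ (-(i : ℤ)) : ℝ) : EReal) * ν (α.coeff i))

/-- A Witt vector is overconvergent if `γ_ε(α) ≠ -∞` for some `ε > 0`. -/
def IsOverconvergent (p : ℕ) {A : Type*} [CommRing A] (ν : A → EReal)
    (α : WittVector p A) : Prop :=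
  ∃ ε : ℝ, 0 < ε ∧ gaussNorm p ν ε α ≠ ⊥

/-- The trivial valuation on an integral domain: `ν 0 = ∞` and `ν a = 0` for `a ≠ 0`. -/
def trivialPV (K : Type*) [Zero K] : K → EReal :=
  fun a => if a = 0 then (⊤ : EReal) else 0


section Helpers
variable {A : Type*} [CommRing A] {ν : A → EReal}

lemma pv_neg (h : IsPseudovaluation ν) (a : A) : ν a ≤ ν (-a) := by
  have := h.min_le_sub 0 a
  simpa [h.map_zero] using this

lemma pv_add (h : IsPseudovaluation ν) (a b : A) : min (ν a) (ν b) ≤ ν (a + b) := by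
  have h1 := h.min_le_sub a (-b)
  have h2 : min (ν a) (ν b) ≤ min (ν a) (ν (-b)) :=
    le_min (min_le_left _ _) (le_trans (min_le_right _ _) (pv_neg h b))
  simpa [sub_neg_eq_add] using le_trans h2 h1

lemma pv_sum (h : IsPseudovaluation ν) {ι : Type*} (s : Finset ι) (c : ι → A) (x : EReal)
    (hx : ∀ i ∈ s, x ≤ ν (c i)) : x ≤ ν (∑ i ∈ s, c i) := by
  induction s using Finset.cons_induction with
  | empty => simp [h.map_zero]
  | cons j s hj ih =>
      rw [Finset.sum_cons]
      refine le_trans (le_min (hx j (Finset.mem_cons_self j s)) ?_) (pv_add h _ _)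
      exact ih fun i hi => hx i (Finset.mem_cons_of_mem hi)

lemma pv_pow (h : IsPseudovaluation ν) (hbot : ∀ a : A, ν a ≠ ⊥) (f : A) {v : ℝ}
    (hv : ν f = (v : EReal)) (k : ℕ) : (((k : ℝ) * v : ℝ) : EReal) ≤ ν (f ^ k) := by
  induction k with
  | zero => simp [h.map_one]
  | succ k ih =>
      have h1 : ν (f ^ k) + ν f ≤ ν (f ^ k * f) := h.add_le_mul _ _ (hbot _) (hbot _)
      rw [pow_succ]
      refine le_trans ?_ h1
      rw [hv]
      calc (((k + 1 : ℕ) : ℝ) * v : ℝ) = (((k : ℝ) * v : ℝ) : EReal) + (v : EReal) := by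
            rw [← EReal.coe_add]; norm_cast; push_cast; ring
        _ ≤ ν (f ^ k) + (v : EReal) := add_le_add_left ih _

end Helpers

lemma ereal_sub_coe_ne_bot {x : EReal} (c : ℝ) (hx : x ≠ ⊥) : x - (c : EReal) ≠ ⊥ := by
  rw [sub_eq_add_neg, ← EReal.coe_neg]
  simp [EReal.add_eq_bot_iff, hx]

lemma ereal_mul_iSup_le {ι : Sort*} {h : ι → EReal} {c : ℝ} (hc : 0 < c) {y : EReal}
    (H : ∀ i, (c : EReal) * h i ≤ y) : (c : EReal) * (⨆ i, h i) ≤ y := by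
  have hc' : (0 : EReal) < (c : EReal) := by exact_mod_cast hc
  have hct : (c : EReal) ≠ ⊤ := EReal.coe_ne_top c
  have h1 : (⨆ i, h i) ≤ y / (c : EReal) :=
    iSup_le fun i => (EReal.le_div_iff_mul_le hc' hct).2 (by rw [mul_comm]; exact H i)
  have := (EReal.le_div_iff_mul_le hc' hct).1 h1
  rwa [mul_comm] at this

lemma key_real_ineq (C D d v mu ar : ℝ) (N m : ℕ) (hC : 0 < C) (hD : 0 ≤ D) (hd : 0 < d)
    (hdD : D ≤ d) (hv : v ≤ 0) (hmN : (m : ℝ) ≤ (N : ℝ))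
    (h1 : mu + (N : ℝ) * v ≤ C * ar + ((N : ℝ) - (m : ℝ)) * D)
    (h2 : mu + (N : ℝ) * d ≤ 0) :
    (1 + 1 / C + (D - v) / (d * C)) * mu ≤ ar - (m : ℝ) * d := by
  have hcd : 0 < C * d := mul_pos hC hd
  rw [← mul_le_mul_iff_right₀ hcd]
  have expand : C * d * ((1 + 1 / C + (D - v) / (d * C)) * mu) = (C * d + d + (D - v)) * mu := by
    field_simp
  rw [expand]
  nlinarith [mul_nonneg (by linarith : (0:ℝ) ≤ -mu - (N:ℝ) * d) (by linarith : (0:ℝ) ≤ D - v),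
    mul_nonneg (mul_nonneg hC.le hd.le) (by linarith : (0:ℝ) ≤ -mu - (N:ℝ) * d),
    mul_le_mul_of_nonneg_left h1 hd.le,
    mul_nonneg (mul_nonneg hC.le hd.le) (mul_nonneg (by linarith : (0:ℝ) ≤ (N:ℝ) - (m:ℝ)) hd.le),
    mul_nonneg (mul_nonneg hd.le hD) (Nat.cast_nonneg m : (0:ℝ) ≤ (m:ℝ))]

/-- Let `f ≠ 0` be localizing with constants `C, D`, and `d ≥ D`, `d > 0`.
Every `z ∈ A_f` has a unique representation `z = a/f^m` with `m` minimal; setting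
`σ(z) = ν(a) - m d`, there is `E > 0` with `ν'(z) ≥ σ(z) ≥ E ν'(z)`.  In particular the
restriction of `ν'` to `A` is linearly equivalent to `ν`. -/
theorem statement8 (A : Type*) [CommRing A] [IsDomain A]
    (ν : A → EReal) (hν : IsNegativePV ν)
    (f : A) (hf0 : f ≠ 0)
    (C D : ℝ) (hC : 0 < C) (hD : 0 ≤ D)
    (hloc : ∀ (n : ℕ) (x : A),
      ν (f ^ n * x) ≤ (C : EReal) * ν x + (((n : ℝ) * D : ℝ) : EReal))
    (d : ℝ) (hd : 0 < d) (hdD : D ≤ d) :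
    (∀ z : Localization.Away f, ∃! q : A × ℕ,
      algebraMap A (Localization.Away f) q.1
        = algebraMap A (Localization.Away f) (f ^ q.2) * z ∧
      ∀ m' < q.2, ¬∃ a' : A, algebraMap A (Localization.Away f) a'
        = algebraMap A (Localization.Away f) (f ^ m') * z) ∧
    (∃ E : ℝ, 0 < E ∧ ∀ (z : Localization.Away f) (a : A) (m : ℕ),
      algebraMap A (Localization.Away f) a
        = algebraMap A (Localization.Away f) (f ^ m) * z →
      (∀ m' < m, ¬∃ a' : A, algebraMap A (Localization.Away f) a'
        = algebraMap A (Localization.Away f) (f ^ m') * z) →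
      (ν a - (((m : ℝ) * d : ℝ) : EReal) ≤ locPV ν f d z ∧
       (E : EReal) * locPV ν f d z ≤ ν a - (((m : ℝ) * d : ℝ) : EReal))) ∧
    LinearlyEquivalent (fun a : A => locPV ν f d (algebraMap A (Localization.Away f) a)) ν := by
  obtain ⟨hpv, hbot, hneg⟩ := hν
  have hinj : Function.Injective (algebraMap A (Localization.Away f)) :=
    IsLocalization.injective _ (powers_le_nonZeroDivisors_of_noZeroDivisors hf0)
  have hunit : ∀ k : ℕ, IsUnit (algebraMap A (Localization.Away f) (f ^ k)) :=
    fun k => IsLocalization.map_units (Localization.Away f) (⟨f ^ k, k, rfl⟩ : Submonoid.powers f)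
  have hreal : ∀ x : A, x ≠ 0 → ∃ r : ℝ, ν x = (r : EReal) ∧ r ≤ 0 := by
    intro x hx
    have h1 := hneg x hx
    have h2 : ν x ≠ ⊤ := fun h => by simp [h] at h1
    refine ⟨(ν x).toReal, (EReal.coe_toReal h2 (hbot x)).symm, ?_⟩
    rw [← EReal.coe_toReal h2 (hbot x)] at h1
    exact_mod_cast h1
  obtain ⟨v, hv, hv0⟩ := hreal f hf0
  set E : ℝ := 1 + 1 / C + (D - v) / (d * C) with hEdef
  have hE : 0 < E := by
    have h1 : 0 < 1 / C := by positivity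
    have h2 : 0 ≤ (D - v) / (d * C) := div_nonneg (by linarith) (by positivity)
    rw [hEdef]; linarith
  have main : ∀ (z : Localization.Away f) (a : A) (m : ℕ),
      algebraMap A (Localization.Away f) a
        = algebraMap A (Localization.Away f) (f ^ m) * z →
      (∀ m' < m, ¬∃ a' : A, algebraMap A (Localization.Away f) a'
        = algebraMap A (Localization.Away f) (f ^ m') * z) →
      (ν a - (((m : ℝ) * d : ℝ) : EReal) ≤ locPV ν f d z ∧
       (E : EReal) * locPV ν f d z ≤ ν a - (((m : ℝ) * d : ℝ) : EReal)) := by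
    intro z a m halg hmin
    constructor
    · -- lower bound : canonical representation as a monomial
      have hmulinv : algebraMap A (Localization.Away f) f
          * IsLocalization.Away.invSelf (S := Localization.Away f) f = 1 :=
        IsLocalization.Away.mul_invSelf f
      have hg0 : Polynomial.aeval (IsLocalization.Away.invSelf (S := Localization.Away f) f)
          (Polynomial.monomial m a) = z := by
        rw [Polynomial.aeval_monomial, halg, map_pow,
          mul_comm ((algebraMap A (Localization.Away f) f) ^ m) z, mul_assoc, ← mul_pow,
          hmulinv, one_pow, mul_one]
      have hle : ν a - (((m : ℝ) * d : ℝ) : EReal) ≤ polyPV ν d (Polynomial.monomial m a) := by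
        unfold polyPV
        refine le_iInf fun i => ?_
        by_cases him : m = i
        · subst him
          rw [Polynomial.coeff_monomial, if_pos rfl]
        · rw [Polynomial.coeff_monomial, if_neg him, hpv.map_zero, EReal.top_sub_coe]
          exact le_top
      refine le_trans hle ?_
      unfold locPV
      exact le_iSup₂_of_le (Polynomial.monomial m a) hg0 le_rfl
    · -- upper bound
      rcases eq_or_ne z 0 with rfl | hz
      · have ha0 : a = 0 := hinj (by rw [halg, mul_zero, map_zero])
        rw [ha0, hpv.map_zero, EReal.top_sub_coe]
        exact le_top
      have ha0 : a ≠ 0 := by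
        rintro rfl
        exact hz (((hunit m).mul_right_eq_zero).1 (by rw [← halg, map_zero]))
      obtain ⟨ar, har, har0⟩ := hreal a ha0
      unfold locPV
      refine ereal_mul_iSup_le hE fun g => ereal_mul_iSup_le hE fun hg => ?_
      have hgne : g ≠ 0 := by
        rintro rfl
        exact hz (by simpa using hg.symm)
      set N := g.natDegree with hNdef
      have hcN : g.coeff N ≠ 0 := by
        have := Polynomial.leadingCoeff_ne_zero.mpr hgne
        rwa [Polynomial.leadingCoeff] at this
      obtain ⟨rN, hrN, hrN0⟩ := hreal _ hcN
      have hμle : ∀ i : ℕ, polyPV ν d g ≤ ν (g.coeff i) - (((i : ℝ) * d : ℝ) : EReal) := by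
        intro i; unfold polyPV; exact iInf_le _ i
      have hBle : (Finset.range (N + 1)).inf
          (fun i => ν (g.coeff i) - (((i : ℝ) * d : ℝ) : EReal)) ≤ polyPV ν d g := by
        unfold polyPV
        refine le_iInf fun i => ?_
        by_cases hi : i < N + 1
        · exact Finset.inf_le (Finset.mem_range.2 hi)
        · rw [Polynomial.coeff_eq_zero_of_natDegree_lt (by omega), hpv.map_zero,
            EReal.top_sub_coe]
          exact le_top
      have hBbot : (⊥ : EReal) < (Finset.range (N + 1)).inf
          (fun i => ν (g.coeff i) - (((i : ℝ) * d : ℝ) : EReal)) := by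
        rw [Finset.lt_inf_iff (by simp : (⊥ : EReal) < ⊤)]
        exact fun i _ => (ereal_sub_coe_ne_bot _ (hbot _)).bot_lt
      have hμbot : polyPV ν d g ≠ ⊥ := (lt_of_lt_of_le hBbot hBle).ne'
      have hμtop : polyPV ν d g ≠ ⊤ :=
        ne_top_of_le_ne_top (by rw [hrN, ← EReal.coe_sub]; exact EReal.coe_ne_top _) (hμle N)
      obtain ⟨mu, hmu⟩ : ∃ r : ℝ, polyPV ν d g = (r : EReal) :=
        ⟨_, (EReal.coe_toReal hμtop hμbot).symm⟩
      have h2' : mu + (N : ℝ) * d ≤ 0 := by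
        have := hμle N
        rw [hmu, hrN, ← EReal.coe_sub] at this
        have := EReal.coe_le_coe_iff.1 this
        linarith
      have hz' : z = ∑ l ∈ Finset.range (N + 1), algebraMap A (Localization.Away f) (g.coeff l)
          * (IsLocalization.Away.invSelf (S := Localization.Away f) f) ^ l := by
        rw [← hg, Polynomial.aeval_eq_sum_range]
        exact Finset.sum_congr rfl fun l _ => Algebra.smul_def _ _
      set b := ∑ l ∈ Finset.range (N + 1), g.coeff l * f ^ (N - l) with hbdef
      have hb : algebraMap A (Localization.Away f) b
          = algebraMap A (Localization.Away f) (f ^ N) * z := by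
        rw [hbdef, hz', map_sum, Finset.mul_sum]
        refine Finset.sum_congr rfl fun l hl => ?_
        have hlN : l ≤ N := Nat.lt_succ_iff.1 (Finset.mem_range.1 hl)
        obtain ⟨k, hk⟩ : ∃ k, N = k + l := ⟨N - l, (Nat.sub_add_cancel hlN).symm⟩
        rw [map_mul, map_pow, map_pow, hk, Nat.add_sub_cancel, pow_add, mul_assoc,
          mul_left_comm ((algebraMap A (Localization.Away f) f) ^ l), ← mul_pow,
          IsLocalization.Away.mul_invSelf, one_pow, mul_one]
        ring
      have hmN : m ≤ N := by
        by_contra hlt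
        exact hmin N (by omega) ⟨b, hb⟩
      have hba : f ^ (N - m) * a = b := hinj (by
        rw [map_mul, map_pow, halg, map_pow, ← mul_assoc, ← pow_add, Nat.sub_add_cancel hmN,
          ← map_pow, hb])
      have hνb : (((mu + (N : ℝ) * v) : ℝ) : EReal) ≤ ν b := by
        rw [hbdef]
        refine pv_sum hpv _ _ _ fun l hl => ?_
        have hlN : l ≤ N := Nat.lt_succ_iff.1 (Finset.mem_range.1 hl)
        by_cases hc : g.coeff l = 0
        · rw [hc, zero_mul, hpv.map_zero]; exact le_top
        obtain ⟨r, hr, hr0⟩ := hreal _ hc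
        have h1 : ν (g.coeff l) + ν (f ^ (N - l)) ≤ ν (g.coeff l * f ^ (N - l)) :=
          hpv.add_le_mul _ _ (hbot _) (hbot _)
        have h2 := pv_pow hpv hbot f hv (N - l)
        have h3 : (mu : EReal) ≤ ν (g.coeff l) - (((l : ℝ) * d : ℝ) : EReal) := hmu ▸ hμle l
        rw [hr, ← EReal.coe_sub] at h3
        have h4 : mu ≤ r - (l : ℝ) * d := EReal.coe_le_coe_iff.1 h3
        refine le_trans ?_ h1
        rw [hr]
        calc (((mu + (N : ℝ) * v) : ℝ) : EReal)
            ≤ (((r + ((N - l : ℕ) : ℝ) * v) : ℝ) : EReal) := by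
              apply EReal.coe_le_coe_iff.2
              rw [Nat.cast_sub hlN]
              nlinarith [mul_nonneg (Nat.cast_nonneg l : (0:ℝ) ≤ (l:ℝ))
                (by linarith : (0:ℝ) ≤ d - v)]
          _ = (r : EReal) + ((((N - l : ℕ) : ℝ) * v : ℝ) : EReal) := by rw [← EReal.coe_add]
          _ ≤ (r : EReal) + ν (f ^ (N - l)) := add_le_add_right h2 _
      have h5 := hloc (N - m) a
      rw [hba] at h5
      have h6 : (((mu + (N : ℝ) * v) : ℝ) : EReal)
          ≤ ((C * ar + ((N : ℝ) - (m : ℝ)) * D : ℝ) : EReal) := by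
        refine le_trans hνb (le_trans h5 ?_)
        rw [har, ← EReal.coe_mul, ← EReal.coe_add, Nat.cast_sub hmN]
      have h1' : mu + (N : ℝ) * v ≤ C * ar + ((N : ℝ) - (m : ℝ)) * D :=
        EReal.coe_le_coe_iff.1 h6
      rw [hmu, har, ← EReal.coe_mul, ← EReal.coe_sub]
      exact EReal.coe_le_coe_iff.2
        (key_real_ineq C D d v mu ar N m hC hD hd hdD hv0 (by exact_mod_cast hmN) h1' h2')
  refine ⟨?_, ⟨E, hE, main⟩, ?_⟩
  · intro z
    have hPz : ∃ m : ℕ, ∃ a : A, algebraMap A (Localization.Away f) a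
        = algebraMap A (Localization.Away f) (f ^ m) * z := by
      obtain ⟨⟨x, s⟩, hx⟩ := IsLocalization.surj (Submonoid.powers f) z
      obtain ⟨n, hn⟩ := s.2
      refine ⟨n, x, ?_⟩
      have hn' : f ^ n = (s : A) := hn
      rw [hn', ← hx]
      ring
    obtain ⟨a₀, ha₀⟩ := Nat.find_spec hPz
    have hmin₀ : ∀ m' < Nat.find hPz, ¬∃ a' : A, algebraMap A (Localization.Away f) a'
        = algebraMap A (Localization.Away f) (f ^ m') * z := fun m' h => Nat.find_min hPz h
    refine ⟨(a₀, Nat.find hPz), ⟨ha₀, hmin₀⟩, ?_⟩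
    rintro ⟨a', m'⟩ ⟨h1, h2⟩
    have hm : m' = Nat.find hPz := by
      rcases lt_trichotomy m' (Nat.find hPz) with h | h | h
      · exact absurd ⟨a', h1⟩ (hmin₀ m' h)
      · exact h
      · exact absurd ⟨a₀, ha₀⟩ (h2 _ h)
    subst hm
    have ha : a' = a₀ := hinj (by rw [h1, ha₀])
    simp [ha]
  · refine ⟨E, 1, 0, 0, hE, one_pos, le_rfl, le_rfl, fun a => ?_, fun a => ?_⟩
    · have := (main (algebraMap A (Localization.Away f) a) a 0
        (by rw [pow_zero, map_one, one_mul]) (fun m' h => absurd h (Nat.not_lt_zero m'))).1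
      simpa using this
    · have := (main (algebraMap A (Localization.Away f) a) a 0
        (by rw [pow_zero, map_one, one_mul]) (fun m' h => absurd h (Nat.not_lt_zero m'))).2
      simpa using this
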